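/- arXiv:math/0209263 — 3 statements merged into one kernel-verified Lean document; each statement's English description precedes it below -/
import Mathlib

section
/- The spaces Val_k(V) of translation invariant continuous valuations homogeneous of degree k, for k = 0, 1, …, n = dim V, form independent subspaces of Val(V): if φ₀ + φ₁ + ⋯ + φ_n = 0 with φ_k ∈ Val_k(V) for each k, then each φ_k = 0. -/
open Pointwise MeasureTheory

/-- A (nonempty) convex body in `V`. -/
def IsConvBody {V : Type*} [NormedAddCommGroup V] [NormedSpace ℝ V] (K : Set V) : Prop :=
  K.Nonempty ∧ IsCompact K ∧ Convex ℝ K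

/-- The valuation (inclusion-exclusion) property on convex bodies. -/
def IsValuation {V : Type*} [NormedAddCommGroup V] [NormedSpace ℝ V] (φ : Set V → ℂ) : Prop :=
  ∀ K L : Set V, IsConvBody K → IsConvBody L → Convex ℝ (K ∪ L) →
    φ (K ∪ L) + φ (K ∩ L) = φ K + φ L

/-- Translation invariance on convex bodies. -/
def IsTransInv {V : Type*} [NormedAddCommGroup V] [NormedSpace ℝ V] (φ : Set V → ℂ) : Prop :=
  ∀ (x : V) (K : Set V), IsConvBody K → φ ((x + ·) '' K) = φ K

/-- Continuity with respect to the Hausdorff metric on convex bodies. -/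
def IsHausdorffCont {V : Type*} [NormedAddCommGroup V] [NormedSpace ℝ V] (φ : Set V → ℂ) : Prop :=
  ∀ K : Set V, IsConvBody K → ∀ ε : ℝ, 0 < ε → ∃ δ : ℝ, 0 < δ ∧
    ∀ L : Set V, IsConvBody L → Metric.hausdorffDist K L < δ → ‖φ L - φ K‖ < ε

/-- Homogeneity of degree `k ∈ ℕ` on convex bodies. -/
def IsHomogOfDeg {V : Type*} [NormedAddCommGroup V] [NormedSpace ℝ V] (k : ℕ)
    (φ : Set V → ℂ) : Prop :=
  ∀ c : ℝ, 0 < c → ∀ K : Set V, IsConvBody K → φ (c • K) = (c : ℂ) ^ k * φ K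

/-- independence part of McMullen's decomposition: if translation invariant
continuous valuations `φ k`, homogeneous of degree `k` for `k = 0, …, n = dim V`, sum to
zero, then each of them vanishes. -/
theorem mcmullen_homogeneous_components_independent
    {V : Type*} [NormedAddCommGroup V] [NormedSpace ℝ V] [FiniteDimensional ℝ V]
    (n : ℕ) (hn : n = Module.finrank ℝ V)
    (φ : ℕ → Set V → ℂ)
    (hval : ∀ k ≤ n, IsValuation (φ k))
    (hti : ∀ k ≤ n, IsTransInv (φ k))
    (hcont : ∀ k ≤ n, IsHausdorffCont (φ k))
    (hhom : ∀ k ≤ n, IsHomogOfDeg k (φ k))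
    (hsum : ∀ K : Set V, IsConvBody K → ∑ k ∈ Finset.range (n + 1), φ k K = 0) :
    ∀ k ≤ n, ∀ K : Set V, IsConvBody K → φ k K = 0 := by

  intro k hk K hK
  -- the dilate c • K is a convex body for c > 0
  have hbody : ∀ c : ℝ, 0 < c → IsConvBody (c • K) := by
    intro c hc
    obtain ⟨hne, hcomp, hconv⟩ := hK
    refine ⟨hne.smul_set, ?_, hconv.smul c⟩
    have : c • K = (fun x : V => c • x) '' K := rfl
    rw [this]
    exact hcomp.image (continuous_const_smul c)
  -- polynomial whose coefficients are the φ k K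
  set p : Polynomial ℂ :=
    ∑ j ∈ Finset.range (n + 1), Polynomial.C (φ j K) * Polynomial.X ^ j with hp
  have hroot : ∀ c : ℝ, 0 < c → p.eval (c : ℂ) = 0 := by
    intro c hc
    have h1 : ∑ j ∈ Finset.range (n + 1), φ j (c • K) = 0 := hsum _ (hbody c hc)
    have h2 : ∀ j ∈ Finset.range (n + 1), φ j (c • K) = (c : ℂ) ^ j * φ j K := by
      intro j hj
      exact hhom j (Nat.lt_succ_iff.mp (Finset.mem_range.mp hj)) c hc K hK
    rw [Finset.sum_congr rfl h2] at h1
    rw [hp, Polynomial.eval_finset_sum]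
    simp only [Polynomial.eval_mul, Polynomial.eval_C, Polynomial.eval_pow, Polynomial.eval_X]
    rw [← h1]
    exact Finset.sum_congr rfl fun j _ => mul_comm _ _
  have hpzero : p = 0 := by
    apply Polynomial.eq_zero_of_infinite_isRoot
    apply Set.Infinite.mono (s := (fun c : ℝ => (c : ℂ)) '' Set.Ioi 0)
    · rintro z ⟨c, hc, rfl⟩
      exact hroot c hc
    · exact Set.Infinite.image (fun a _ b _ h => by exact_mod_cast h)
        (Set.Ioi_infinite 0)
  have hcoeff : p.coeff k = φ k K := by
    rw [hp, Polynomial.finset_sum_coeff]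
    rw [Finset.sum_eq_single k]
    · simp
    · intro j hj hjk
      simp only [Polynomial.coeff_C_mul, Polynomial.coeff_X_pow]
      rw [if_neg (Ne.symm hjk), mul_zero]
    · intro h
      exact absurd (Finset.mem_range.mpr (Nat.lt_succ_iff.mpr hk)) h
  rw [← hcoeff, hpzero, Polynomial.coeff_zero]
end

section
/- Let E and F be linear subspaces of a Euclidean space V with dim E = dim F = i. Define |cos(E,F)| = vol_i(Pr_F(A)) / vol_i(A), where A ⊆ E is any measurable subset of positive i-dimensional volume and Pr_F is orthogonal projection onto F. Then this quantity is independent of the choice of A, and |cos(E,F)| = |cos(E^⊥, F^⊥)|, where E^⊥, F^⊥ are the orthogonal complements. -/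
open MeasureTheory
open scoped Matrix

noncomputable section

instance hausdorff_haar (k : ℕ) :
    (μH[(k : ℝ)] : Measure (EuclideanSpace ℝ (Fin k))).IsAddHaarMeasure := by
  have hd : (0:ℝ) ≤ (k:ℝ) := Nat.cast_nonneg k
  have lip : LipschitzWith 1 (WithLp.equiv 2 (Fin k → ℝ)) := PiLp.lipschitzWith_ofLp 2 _
  have anti := PiLp.antilipschitzWith_ofLp 2 (fun _ : Fin k => ℝ)
  have hpi : (μH[(k:ℝ)] : Measure (Fin k → ℝ)) = volume := by
    have := hausdorffMeasure_pi_real (ι := Fin k)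
    simpa using this
  have hhomeo : IsOpenMap (WithLp.equiv 2 (Fin k → ℝ)) :=
    (PiLp.continuousLinearEquiv 2 ℝ (fun _ : Fin k => ℝ)).toHomeomorph.isOpenMap
  have hfin : IsFiniteMeasureOnCompacts (μH[(k : ℝ)] : Measure (EuclideanSpace ℝ (Fin k))) := by
    constructor
    intro K hK
    refine lt_of_le_of_lt (anti.le_hausdorffMeasure_image hd K) ?_
    have himg : IsCompact ((WithLp.equiv 2 (Fin k → ℝ)) '' K) :=
      hK.image (PiLp.continuousLinearEquiv 2 ℝ _).continuous
    rw [hpi]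
    exact ENNReal.mul_lt_top (ENNReal.rpow_lt_top_of_nonneg hd ENNReal.coe_ne_top)
      himg.measure_lt_top
  have hpos : (μH[(k : ℝ)] : Measure (EuclideanSpace ℝ (Fin k))).IsOpenPosMeasure := by
    constructor
    intro U hU hne
    have h1 := lip.hausdorffMeasure_image_le hd U
    have h2 : 0 < (volume : Measure (Fin k → ℝ)) ((WithLp.equiv 2 (Fin k → ℝ)) '' U) :=
      (hhomeo U hU).measure_pos _ (hne.image _)
    rw [← hpi] at h2
    intro h0
    rw [h0] at h1
    simp at h1
    change μH[(k:ℝ)] ((WithLp.equiv 2 (Fin k → ℝ)) '' U) = 0 at h1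
    rw [h1] at h2
    exact h2.ne' rfl
  exact ⟨⟩

lemma proj_scaling {n : ℕ} (k : ℕ) (E F : Submodule ℝ (EuclideanSpace ℝ (Fin n)))
    (bE : OrthonormalBasis (Fin k) ℝ E) (bF : OrthonormalBasis (Fin k) ℝ F)
    (A : Set (EuclideanSpace ℝ (Fin n))) (hA : A ⊆ (E : Set (EuclideanSpace ℝ (Fin n)))) :
    μH[(k : ℝ)] ((fun x => (Submodule.orthogonalProjection F x : EuclideanSpace ℝ (Fin n))) '' A)
      = ENNReal.ofReal
          |(Matrix.of fun r c : Fin k =>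
              (inner ℝ ((bF r : EuclideanSpace ℝ (Fin n))) ((bE c : EuclideanSpace ℝ (Fin n))) : ℝ)).det|
        * μH[(k : ℝ)] A := by
  classical
  have hd : (0:ℝ) ≤ (k:ℝ) := Nat.cast_nonneg k
  set φ : EuclideanSpace ℝ (Fin k) → EuclideanSpace ℝ (Fin n) := fun x => ((bE.repr.symm x : E) : EuclideanSpace ℝ (Fin n)) with hφdef
  have hφ : Isometry φ := (E.subtypeₗᵢ.comp bE.repr.symm.toLinearIsometry).isometry
  set ψ : EuclideanSpace ℝ (Fin k) → EuclideanSpace ℝ (Fin n) := fun y => ((bF.repr.symm y : F) : EuclideanSpace ℝ (Fin n)) with hψdef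
  have hψ : Isometry ψ := (F.subtypeₗᵢ.comp bF.repr.symm.toLinearIsometry).isometry
  set s : Set (EuclideanSpace ℝ (Fin k)) := φ ⁻¹' A with hsdef
  have hAs : φ '' s = A := by
    apply Set.image_preimage_eq_of_subset
    intro a ha
    exact ⟨bE.repr ⟨a, hA ha⟩, by simp [hφdef]⟩
  have hmA : μH[(k : ℝ)] A = μH[(k : ℝ)] s := by
    rw [← hAs]; exact hφ.hausdorffMeasure_image (Or.inl hd) s
  set g : EuclideanSpace ℝ (Fin k) →ₗ[ℝ] EuclideanSpace ℝ (Fin k) :=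
    (bF.repr.toLinearEquiv.toLinearMap) ∘ₗ
      ((Submodule.orthogonalProjection F : EuclideanSpace ℝ (Fin n) →L[ℝ] F) : EuclideanSpace ℝ (Fin n) →ₗ[ℝ] F) ∘ₗ
        (E.subtype ∘ₗ bE.repr.symm.toLinearEquiv.toLinearMap) with hgdef
  have himg : (fun x => (Submodule.orthogonalProjection F x : EuclideanSpace ℝ (Fin n))) '' A = ψ '' (g '' s) := by
    rw [← hAs, ← Set.image_comp, ← Set.image_comp]
    apply Set.image_congr
    intro x _
    simp [hφdef, hψdef, hgdef]
  have hdet : LinearMap.det g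
      = (Matrix.of fun r c : Fin k =>
          (inner ℝ ((bF r : EuclideanSpace ℝ (Fin n))) ((bE c : EuclideanSpace ℝ (Fin n))) : ℝ)).det := by
    rw [← LinearMap.det_toMatrix (EuclideanSpace.basisFun (Fin k) ℝ).toBasis g]
    congr 1
    apply Matrix.ext
    intro r c
    rw [LinearMap.toMatrix_apply]
    have hBc : (EuclideanSpace.basisFun (Fin k) ℝ).toBasis c = EuclideanSpace.single c 1 := by
      simp
    rw [hBc]
    have hg1 : g (EuclideanSpace.single c 1)
        = bF.repr (Submodule.orthogonalProjection F ((bE c : EuclideanSpace ℝ (Fin n)))) := by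
      simp [hgdef, OrthonormalBasis.repr_symm_single]
    rw [hg1, OrthonormalBasis.coe_toBasis_repr_apply, EuclideanSpace.basisFun_repr,
      OrthonormalBasis.repr_apply_apply, Submodule.inner_orthogonalProjectionOnto_eq_of_mem_left,
      Matrix.of_apply]
  rw [himg, hψ.hausdorffMeasure_image (Or.inl hd),
    Measure.addHaar_image_linearMap (μ := (μH[(k : ℝ)] : Measure (EuclideanSpace ℝ (Fin k)))) g s,
    hdet, hmA]

lemma det_abs_eq {n p q : ℕ} (hpq : p + q = n) (hn : 0 < n)
    (E F : Submodule ℝ (EuclideanSpace ℝ (Fin n)))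
    (bE : OrthonormalBasis (Fin p) ℝ E) (bE' : OrthonormalBasis (Fin q) ℝ Eᗮ)
    (bF : OrthonormalBasis (Fin p) ℝ F) (bF' : OrthonormalBasis (Fin q) ℝ Fᗮ) :
    |(Matrix.of fun r c : Fin p =>
        (inner ℝ ((bF r : EuclideanSpace ℝ (Fin n))) ((bE c : EuclideanSpace ℝ (Fin n))) : ℝ)).det|
    = |(Matrix.of fun r c : Fin q =>
        (inner ℝ ((bF' r : EuclideanSpace ℝ (Fin n))) ((bE' c : EuclideanSpace ℝ (Fin n))) : ℝ)).det| := by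
  classical
  set wE : Fin p ⊕ Fin q → EuclideanSpace ℝ (Fin n) :=
    Sum.elim (fun j => ((bE j : EuclideanSpace ℝ (Fin n))))
      (fun j => ((bE' j : EuclideanSpace ℝ (Fin n)))) with hwE
  set wF : Fin p ⊕ Fin q → EuclideanSpace ℝ (Fin n) :=
    Sum.elim (fun j => ((bF j : EuclideanSpace ℝ (Fin n))))
      (fun j => ((bF' j : EuclideanSpace ℝ (Fin n)))) with hwF
  have honE : Orthonormal ℝ wE := by
    rw [orthonormal_iff_ite]
    rintro (a | a) (b | b)
    · have := orthonormal_iff_ite.mp bE.orthonormal a b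
      rw [Submodule.coe_inner] at this
      simpa [hwE] using this
    · simpa [hwE] using Submodule.inner_right_of_mem_orthogonal (bE a).2 (bE' b).2
    · simpa [hwE] using Submodule.inner_left_of_mem_orthogonal (bE b).2 (bE' a).2
    · have := orthonormal_iff_ite.mp bE'.orthonormal a b
      rw [Submodule.coe_inner] at this
      simpa [hwE] using this
  have honF : Orthonormal ℝ wF := by
    rw [orthonormal_iff_ite]
    rintro (a | a) (b | b)
    · have := orthonormal_iff_ite.mp bF.orthonormal a b
      rw [Submodule.coe_inner] at this
      simpa [hwF] using this
    · simpa [hwF] using Submodule.inner_right_of_mem_orthogonal (bF a).2 (bF' b).2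
    · simpa [hwF] using Submodule.inner_left_of_mem_orthogonal (bF b).2 (bF' a).2
    · have := orthonormal_iff_ite.mp bF'.orthonormal a b
      rw [Submodule.coe_inner] at this
      simpa [hwF] using this
  -- `wF` is an orthonormal basis of the whole space
  have hspan : ⊤ ≤ Submodule.span ℝ (Set.range wF) := by
    refine ge_of_eq (honF.linearIndependent.span_eq_top_of_card_eq_finrank' ?_)
    · simp [hpq]
  have hne : Nonempty (Fin p ⊕ Fin q) := by
    rw [← Fintype.card_pos_iff]
    simp [hpq, hn]
  set B : OrthonormalBasis (Fin p ⊕ Fin q) ℝ (EuclideanSpace ℝ (Fin n)) :=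
    OrthonormalBasis.mk honF hspan with hB
  have hBcoe : ∀ r, B r = wF r := fun r => by rw [hB, OrthonormalBasis.coe_mk]
  -- the big matrix
  set A : Matrix (Fin p) (Fin p) ℝ := Matrix.of fun r c => (inner ℝ (wF (Sum.inl r)) (wE (Sum.inl c)) : ℝ)
  set Bm : Matrix (Fin p) (Fin q) ℝ := Matrix.of fun r c => (inner ℝ (wF (Sum.inl r)) (wE (Sum.inr c)) : ℝ)
  set Cm : Matrix (Fin q) (Fin p) ℝ := Matrix.of fun r c => (inner ℝ (wF (Sum.inr r)) (wE (Sum.inl c)) : ℝ)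
  set D : Matrix (Fin q) (Fin q) ℝ := Matrix.of fun r c => (inner ℝ (wF (Sum.inr r)) (wE (Sum.inr c)) : ℝ)
  set M : Matrix (Fin p ⊕ Fin q) (Fin p ⊕ Fin q) ℝ := Matrix.fromBlocks A Bm Cm D with hM
  have hMapp : ∀ r c : Fin p ⊕ Fin q, M r c = (inner ℝ (wF r) (wE c) : ℝ) := by
    rintro (r | r) (c | c) <;> rfl
  have hMtM : Mᵀ * M = 1 := by
    ext a b
    rw [Matrix.mul_apply, Matrix.one_apply]
    have : ∀ j, Mᵀ a j * M j b = (inner ℝ (wE a) (B j) : ℝ) * (inner ℝ (B j) (wE b) : ℝ) := by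
      intro j
      rw [Matrix.transpose_apply, hMapp, hMapp, hBcoe, real_inner_comm]
    rw [Finset.sum_congr rfl fun j _ => this j, B.sum_inner_mul_inner]
    exact orthonormal_iff_ite.mp honE a b
  have hMMt : M * Mᵀ = 1 := mul_eq_one_comm.mp hMtM
  -- block identities
  have h11 : Aᵀ * A + Cmᵀ * Cm = 1 := by
    have := congrArg Matrix.toBlocks₁₁ (hMtM)
    simpa [hM, Matrix.fromBlocks_transpose, Matrix.fromBlocks_multiply, ← Matrix.fromBlocks_one,
      Matrix.toBlocks_fromBlocks₁₁] using this
  have h22 : Cm * Cmᵀ + D * Dᵀ = 1 := by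
    have := congrArg Matrix.toBlocks₂₂ (hMMt)
    simpa [hM, Matrix.fromBlocks_transpose, Matrix.fromBlocks_multiply, ← Matrix.fromBlocks_one,
      Matrix.toBlocks_fromBlocks₂₂] using this
  have hdet : A.det ^ 2 = D.det ^ 2 := by
    have e1 : A.det ^ 2 = (Aᵀ * A).det := by
      rw [Matrix.det_mul, Matrix.det_transpose, sq]
    have e2 : D.det ^ 2 = (D * Dᵀ).det := by
      rw [Matrix.det_mul, Matrix.det_transpose, sq]
    rw [e1, e2]
    have h1 : Aᵀ * A = 1 + (-Cmᵀ) * Cm := by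
      rw [Matrix.neg_mul]
      rw [← h11]; abel
    have h2 : D * Dᵀ = 1 + Cm * (-Cmᵀ) := by
      rw [Matrix.mul_neg]
      rw [← h22]; abel
    rw [h1, h2, Matrix.det_one_add_mul_comm]
  have : (Matrix.of fun r c : Fin p =>
        (inner ℝ ((bF r : EuclideanSpace ℝ (Fin n))) ((bE c : EuclideanSpace ℝ (Fin n))) : ℝ)) = A := rfl
  rw [this]
  have : (Matrix.of fun r c : Fin q =>
        (inner ℝ ((bF' r : EuclideanSpace ℝ (Fin n))) ((bE' c : EuclideanSpace ℝ (Fin n))) : ℝ)) = D := rfl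
  rw [this]
  rcases sq_eq_sq_iff_eq_or_eq_neg.mp hdet with h | h
  · rw [h]
  · rw [h, abs_neg]

/-- for `i`-dimensional subspaces `E, F` of Euclidean space, the ratio
`vol_i(Pr_F(A)) / vol_i(A)` (for `A ⊆ E` measurable of positive `i`-dimensional volume)
is independent of `A`, and it agrees with the corresponding ratio for the orthogonal
complements `E^⊥, F^⊥`.  Both claims are stated in cross-multiplied form, using the
`i`-dimensional (resp. `(n-i)`-dimensional) Hausdorff measure. -/
theorem cosine_of_angle_well_defined_and_complement_symmetric
    (n i : ℕ) (hi₁ : 1 ≤ i) (hi₂ : i ≤ n - 1)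
    (E F : Submodule ℝ (EuclideanSpace ℝ (Fin n)))
    (hE : Module.finrank ℝ E = i) (hF : Module.finrank ℝ F = i) :
    -- well-definedness: independence of the choice of the subset of `E`
    (∀ A B : Set (EuclideanSpace ℝ (Fin n)),
      A ⊆ (E : Set (EuclideanSpace ℝ (Fin n))) → MeasurableSet A → 0 < μH[(i : ℝ)] A →
      B ⊆ (E : Set (EuclideanSpace ℝ (Fin n))) → MeasurableSet B → 0 < μH[(i : ℝ)] B →
      μH[(i : ℝ)] ((fun x => (Submodule.orthogonalProjection F x : EuclideanSpace ℝ (Fin n))) '' A)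
          * μH[(i : ℝ)] B
        = μH[(i : ℝ)] ((fun x => (Submodule.orthogonalProjection F x : EuclideanSpace ℝ (Fin n))) '' B)
          * μH[(i : ℝ)] A) ∧
    -- `|cos(E,F)| = |cos(E^⊥,F^⊥)|`, in cross-multiplied form
    (∀ A A' : Set (EuclideanSpace ℝ (Fin n)),
      A ⊆ (E : Set (EuclideanSpace ℝ (Fin n))) → MeasurableSet A → 0 < μH[(i : ℝ)] A →
      A' ⊆ (Eᗮ : Set (EuclideanSpace ℝ (Fin n))) → MeasurableSet A' →
        0 < μH[((n - i : ℕ) : ℝ)] A' →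
      μH[(i : ℝ)] ((fun x => (Submodule.orthogonalProjection F x : EuclideanSpace ℝ (Fin n))) '' A)
          * μH[((n - i : ℕ) : ℝ)] A'
        = μH[((n - i : ℕ) : ℝ)]
            ((fun x => (Submodule.orthogonalProjection Fᗮ x : EuclideanSpace ℝ (Fin n))) '' A')
          * μH[(i : ℝ)] A) := by
  have hVdim : Module.finrank ℝ (EuclideanSpace ℝ (Fin n)) = n := finrank_euclideanSpace_fin
  have hEperp : Module.finrank ℝ ↥Eᗮ = n - i := by
    have h := Submodule.finrank_add_finrank_orthogonal (K := E)
    rw [hVdim, hE] at h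
    omega
  have hFperp : Module.finrank ℝ ↥Fᗮ = n - i := by
    have h := Submodule.finrank_add_finrank_orthogonal (K := F)
    rw [hVdim, hF] at h
    omega
  let bE := (stdOrthonormalBasis ℝ E).reindex (finCongr hE)
  let bF := (stdOrthonormalBasis ℝ F).reindex (finCongr hF)
  let bE' := (stdOrthonormalBasis ℝ (Eᗮ : Submodule ℝ (EuclideanSpace ℝ (Fin n)))).reindex
    (finCongr hEperp)
  let bF' := (stdOrthonormalBasis ℝ (Fᗮ : Submodule ℝ (EuclideanSpace ℝ (Fin n)))).reindex
    (finCongr hFperp)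
  constructor
  · intro A B hAE _ _ hBE _ _
    rw [proj_scaling i E F bE bF A hAE, proj_scaling i E F bE bF B hBE]
    ring
  · intro A A' hAE _ _ hA'E _ _
    rw [proj_scaling i E F bE bF A hAE,
      proj_scaling (n - i) Eᗮ Fᗮ bE' bF' A' hA'E,
      det_abs_eq (by omega) (by omega) E F bE bE' bF bF']
    ring

end
end

section
/- In ℂ², let E₀ = span_ℝ{1, i} ⊂ ℍ ≅ ℂ² (identifying ℂ² with the quaternions ℍ = ℂ ⊕ jℂ). Identify the Grassmannian of oriented real 2-planes in ℝ⁴ with S² × S², where each S² is the sphere of radius 1/2 centered at (1/2,0,0) in ℝ³ and E₀ corresponds to ((1,0,0),(1,0,0)). Then for E corresponding to (t₁, t₂) with tᵢ = (xᵢ, yᵢ, zᵢ), the cosine of the angle between E and E₀ is |cos(E, E₀)| = |x₁ + x₂ − 1|. -/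
open MeasureTheory Quaternion

/-- Orthogonal projection of `ℍ ≅ ℝ⁴` onto the plane `E₀ = span_ℝ{1, i}`. -/
def projE0 : Quaternion ℝ → Quaternion ℝ := fun x => ⟨x.re, x.imI, 0, 0⟩

/-- The plane `E₀ = span_ℝ{1, i} ⊆ ℍ`. -/
def planeE0 : Set (Quaternion ℝ) := {x | x.imJ = 0 ∧ x.imK = 0}

/-- The quaternion unit `i`. -/
def quatI : Quaternion ℝ := ⟨0, 1, 0, 0⟩

/-- The sphere coordinate `x(q) = (1 + ⟨q i q⁻¹, i⟩)/2 ∈ [0,1]` of a unit quaternion `q`,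
giving the first coordinate of the corresponding point of the sphere of radius `1/2`
centered at `(1/2,0,0)` under the identification `SU(2)/T ≅ S²`. -/
noncomputable def sphX (q : Quaternion ℝ) : ℝ :=
  (1 + (q * quatI * q⁻¹).imI) / 2

noncomputable section CosAux

namespace CosAux

 

lemma norm_coeComplex (z : ℂ) : ‖(z : Quaternion ℝ)‖ = ‖z‖ := by
  have h1 : ‖(z : Quaternion ℝ)‖ ^ 2 = Quaternion.normSq (z : Quaternion ℝ) := by
    rw [Quaternion.normSq_eq_norm_mul_self, sq]
  have h2 : Quaternion.normSq (z : Quaternion ℝ) = z.re ^ 2 + z.im ^ 2 := by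
    rw [Quaternion.normSq_def']; simp
  have h3 : ‖z‖ ^ 2 = z.re ^ 2 + z.im ^ 2 := by
    rw [Complex.sq_norm, Complex.normSq_apply]; ring
  have := h1.trans (h2.trans h3.symm)
  have hn1 : (0:ℝ) ≤ ‖(z:Quaternion ℝ)‖ := norm_nonneg _
  have hn2 : (0:ℝ) ≤ ‖z‖ := norm_nonneg _
  nlinarith [this]

lemma coeComplex_sub (z w : ℂ) : ((z - w : ℂ) : Quaternion ℝ) = (z : Quaternion ℝ) - (w : Quaternion ℝ) := by
  ext <;> simp

lemma isometry_coeComplex : Isometry ((↑) : ℂ → Quaternion ℝ) := by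
  apply Isometry.of_dist_eq; intro z w
  rw [dist_eq_norm, dist_eq_norm, ← coeComplex_sub, norm_coeComplex]

/-- The ℝ-linear map `ℂ → ℂ` given by `z ↦ projE0 (q₁ z u)` read in coordinates. -/
def Tmap (q₁ u : Quaternion ℝ) : ℂ →ₗ[ℝ] ℂ where
  toFun z := ⟨(q₁ * (z : Quaternion ℝ) * u).re, (q₁ * (z : Quaternion ℝ) * u).imI⟩
  map_add' z w := by
    have h : ((z + w : ℂ) : Quaternion ℝ) = (z : Quaternion ℝ) + (w : Quaternion ℝ) := Quaternion.coeComplex_add z w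
    apply Complex.ext <;> simp [h, mul_add, add_mul]
  map_smul' r z := by
    have h : ((r • z : ℂ) : Quaternion ℝ) = r • (z : Quaternion ℝ) := by ext <;> simp
    apply Complex.ext <;> (simp [h]; ring)

lemma det_eq (f : ℂ →ₗ[ℝ] ℂ) :
    LinearMap.det f = (f 1).re * (f Complex.I).im - (f Complex.I).re * (f 1).im := by
  rw [← LinearMap.det_toMatrix Complex.basisOneI, Matrix.det_fin_two]
  simp [LinearMap.toMatrix_apply, Complex.coe_basisOneI_repr, Complex.coe_basisOneI]

end CosAux

end CosAux

/-- Lemma 3.2.1: under the identification of the Grassmannian of oriented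
real 2-planes in `ℝ⁴ ≅ ℍ` with `S² × S²` coming from `Spin(4) = SU(2) × SU(2)` — the plane
corresponding to `(t₁, t₂)` with `tᵢ = (xᵢ, yᵢ, zᵢ)` being `E = q₁ E₀ q₂⁻¹` where
`xⱼ = sphX qⱼ` — the cosine of the angle with `E₀ = span_ℝ{1, i}` is
`|cos(E, E₀)| = |x₁ + x₂ − 1|`, in the sense that orthogonal projection onto `E₀`
multiplies the 2-dimensional Hausdorff measure of subsets of `E` by this factor. -/
theorem cos_angle_with_E0_eq_abs_x1_add_x2_sub_one
    [MeasurableSpace (Quaternion ℝ)] [BorelSpace (Quaternion ℝ)]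
    (q₁ q₂ : Quaternion ℝ) (h₁ : ‖q₁‖ = 1) (h₂ : ‖q₂‖ = 1)
    (E : Set (Quaternion ℝ)) (hE : E = (fun x => q₁ * x * q₂⁻¹) '' planeE0)
    (A : Set (Quaternion ℝ)) (hA : A ⊆ E) (hAm : MeasurableSet A) :
    μH[(2 : ℝ)] (projE0 '' A)
      = ENNReal.ofReal |sphX q₁ + sphX q₂ - 1| * μH[(2 : ℝ)] A := by
  have h2nn : (0:ℝ) ≤ 2 := by norm_num
  have hn₁ : Quaternion.normSq q₁ = 1 := by
    rw [Quaternion.normSq_eq_norm_mul_self, h₁]; norm_num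
  have hn₂ : Quaternion.normSq q₂ = 1 := by
    rw [Quaternion.normSq_eq_norm_mul_self, h₂]; norm_num
  have hinv₁ : q₁⁻¹ = star q₁ := by rw [Quaternion.inv_def, hn₁]; simp
  have hinv₂ : q₂⁻¹ = star q₂ := by rw [Quaternion.inv_def, hn₂]; simp
  rw [hinv₂] at hE
  have hu : ‖star q₂‖ = 1 := by rw [Quaternion.norm_star, h₂]
  set F : ℂ → Quaternion ℝ := fun z => q₁ * (z : Quaternion ℝ) * star q₂ with hF
  have hFiso : Isometry F := by
    apply Isometry.of_dist_eq; intro z w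
    rw [dist_eq_norm, dist_eq_norm]
    have hzw : F z - F w = q₁ * ((z - w : ℂ) : Quaternion ℝ) * star q₂ := by
      rw [CosAux.coeComplex_sub, hF, mul_sub, sub_mul]
    rw [hzw, norm_mul, norm_mul, h₁, hu, CosAux.norm_coeComplex]; ring
  have hrange : E = Set.range F := by
    rw [hE]
    have hpl : planeE0 = Set.range ((↑) : ℂ → Quaternion ℝ) := by
      ext x
      constructor
      · rintro ⟨hj, hk⟩
        exact ⟨⟨x.re, x.imI⟩, by ext <;> simp [hj, hk]⟩
      · rintro ⟨z, rfl⟩; exact ⟨rfl, rfl⟩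
    rw [hpl, ← Set.range_comp]; rfl
  set S : Set ℂ := F ⁻¹' A with hS
  have hAS : A = F '' S := by
    rw [hS]
    exact (Set.image_preimage_eq_of_subset (hrange ▸ hA)).symm
  set T : ℂ →ₗ[ℝ] ℂ := CosAux.Tmap q₁ (star q₂) with hT
  have hproj : ∀ z : ℂ, projE0 (F z) = ((T z : ℂ) : Quaternion ℝ) := fun z => rfl
  have himg : projE0 '' A = ((↑) : ℂ → Quaternion ℝ) '' (T '' S) := by
    rw [hAS, Set.image_image, Set.image_image]
    exact Set.image_congr fun z _ => hproj z
  haveI hH : (μH[(2:ℝ)] : Measure ℂ).IsAddHaarMeasure := by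
    rw [show (2:ℝ) = ((Module.finrank ℝ ℂ : ℕ) : ℝ) by simp [Complex.finrank_real_complex]]
    infer_instance
  have hdet : LinearMap.det T = sphX q₁ + sphX q₂ - 1 := by
    have hq1c : q₁.re^2 + q₁.imI^2 + q₁.imJ^2 + q₁.imK^2 = 1 := by
      rw [Quaternion.normSq_def'] at hn₁; linarith [hn₁]
    have hq2c : q₂.re^2 + q₂.imI^2 + q₂.imJ^2 + q₂.imK^2 = 1 := by
      rw [Quaternion.normSq_def'] at hn₂; linarith [hn₂]
    rw [CosAux.det_eq]
    simp only [hT, CosAux.Tmap, LinearMap.coe_mk, AddHom.coe_mk]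
    have hIre : quatI.re = 0 := rfl
    have hIi : quatI.imI = 1 := rfl
    have hIj : quatI.imJ = 0 := rfl
    have hIk : quatI.imK = 0 := rfl
    simp only [sphX, hinv₁, hinv₂]
    simp only [Quaternion.re_mul, Quaternion.imI_mul, Quaternion.imJ_mul, Quaternion.imK_mul,
      Quaternion.re_star, Quaternion.imI_star, Quaternion.imJ_star, Quaternion.imK_star,
      Quaternion.re_coeComplex, Quaternion.imI_coeComplex,
      Quaternion.imJ_coeComplex, Quaternion.imK_coeComplex, Complex.one_re, Complex.one_im,
      Complex.I_re, Complex.I_im, hIre, hIi, hIj, hIk]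
    linear_combination ((q₂.re^2 + q₂.imI^2) - 1/2 - (q₂.re^2 + q₂.imI^2 + q₂.imJ^2 + q₂.imK^2 - 1)) * hq1c
      + ((q₁.re^2 + q₁.imI^2) - 1/2) * hq2c
  calc μH[(2:ℝ)] (projE0 '' A) = μH[(2:ℝ)] (T '' S) := by
        rw [himg, CosAux.isometry_coeComplex.hausdorffMeasure_image (Or.inl h2nn)]
    _ = ENNReal.ofReal |LinearMap.det T| * μH[(2:ℝ)] S :=
        MeasureTheory.Measure.addHaar_image_linearMap _ T S
    _ = ENNReal.ofReal |sphX q₁ + sphX q₂ - 1| * μH[(2:ℝ)] A := by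
        rw [hdet, hAS, hFiso.hausdorffMeasure_image (Or.inl h2nn)]
end
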